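/- Consider the Chambolle–Pock method applied to the scalar saddle-point problem min_{x∈ℝ} max_{y∈ℝ} xy (i.e. f = g* = 0, L = 1), whose iteration reads x_{k+1} = x_k − τ y_k, y_{k+1} = y_k + σ(x_{k+1} + θ(x_{k+1} − x_k)). If θ > 1/2 and τ, σ > 0 satisfy τσ ≥ 4/(1 + 2θ), then there exists an initial point (x₀, y₀) ∈ ℝ² such that the sequence (x_k, y_k) does not converge; in particular, it does not converge to the unique saddle point (0, 0). -/
import Mathlib


open scoped RealInnerProductSpace
open Filter Topology

noncomputable section

/-- The convex subdifferential of an extended-real-valued function: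
`∂f(x) = { u : ∀ z, f z ≥ f x + ⟪u, z - x⟫ }`. -/
def ESubdiff {E : Type*} [NormedAddCommGroup E] [InnerProductSpace ℝ E]
    (f : E → EReal) (x : E) : Set E :=
  {u | ∀ z : E, f x + ((⟪u, z - x⟫ : ℝ) : EReal) ≤ f z}

/-- Properness of an extended-real-valued function: it never takes the value `⊥`
and is not identically `⊤`. -/
def EProper {E : Type*} (f : E → EReal) : Prop :=
  (∃ x, f x ≠ ⊤) ∧ ∀ x, f x ≠ ⊥

/-- Convexity of an extended-real-valued function. -/
def EConvex {E : Type*} [NormedAddCommGroup E] [NormedSpace ℝ E] (f : E → EReal) : Prop :=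
  ∀ x y : E, ∀ a b : ℝ, 0 ≤ a → 0 ≤ b → a + b = 1 →
    f (a • x + b • y) ≤ (a : EReal) * f x + (b : EReal) * f y

/-- The convex (Fenchel) conjugate `g*(y) = sup_x (⟪x, y⟫ - g x)`. -/
def EConj {E : Type*} [NormedAddCommGroup E] [InnerProductSpace ℝ E]
    (g : E → EReal) (y : E) : EReal :=
  ⨆ x : E, ((⟪x, y⟫ : ℝ) : EReal) - g x

/-- `IsProx τ f x p` states that `p = prox_{τ f}(x)`, i.e. `p` minimizes
`fun z => f z + (1/(2τ)) ‖z - x‖²`. -/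
def IsProx {E : Type*} [NormedAddCommGroup E] [InnerProductSpace ℝ E]
    (τ : ℝ) (f : E → EReal) (x p : E) : Prop :=
  ∀ z : E, f p + ((1 / (2 * τ) * ‖p - x‖ ^ 2 : ℝ) : EReal)
      ≤ f z + ((1 / (2 * τ) * ‖z - x‖ ^ 2 : ℝ) : EReal)

/-- The Lagrangian `𝓛(x, y) = f x + ⟪y, L x⟫ - g*(y)` of the saddle-point problem. -/
def Lagr {E F : Type*} [NormedAddCommGroup E] [InnerProductSpace ℝ E]
    [NormedAddCommGroup F] [InnerProductSpace ℝ F]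
    (f : E → EReal) (gs : F → EReal) (L : E →L[ℝ] F) (x : E) (y : F) : EReal :=
  f x + ((⟪y, L x⟫ : ℝ) : EReal) - gs y

theorem counterexample_nonconvergence
    (θ τ σ : ℝ) (hθ : 1 / 2 < θ) (hτ : 0 < τ) (hσ : 0 < σ)
    (hstep : 4 / (1 + 2 * θ) ≤ τ * σ)
    :
    ∃ x y : ℕ → ℝ,
      (∀ k : ℕ, x (k + 1) = x k - τ * y k) ∧
      (∀ k : ℕ, y (k + 1) = y k + σ * (x (k + 1) + θ * (x (k + 1) - x k))) ∧
      ¬(∃ p : ℝ × ℝ, Tendsto (fun k => (x k, y k)) atTop (𝓝 p)) ∧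
      ¬Tendsto (fun k => (x k, y k)) atTop (𝓝 ((0 : ℝ), (0 : ℝ))) := by
  -- eigenvalue of the iteration matrix
  have hθ2 : (0:ℝ) < 1 + 2*θ := by linarith
  have h4 : 4 ≤ τ*σ*(1+2*θ) := by
    rw [div_le_iff₀ hθ2] at hstep; linarith
  have hΔ : 0 ≤ (2 - τ*σ*(1+θ))^2 - 4*(1 - τ*σ*θ) := by nlinarith [sq_nonneg (2 - τ*σ*(1+θ) + 2)]
  set s : ℝ := Real.sqrt ((2 - τ*σ*(1+θ))^2 - 4*(1 - τ*σ*θ)) with hsdef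
  have hs0 : 0 ≤ s := Real.sqrt_nonneg _
  have hs2 : s^2 = (2 - τ*σ*(1+θ))^2 - 4*(1 - τ*σ*θ) := Real.sq_sqrt hΔ
  obtain ⟨l, hquad, hlm1⟩ :
      ∃ l : ℝ, l^2 = (2 - τ*σ*(1+θ))*l - (1 - τ*σ*θ) ∧ l ≤ -1 := by
    refine ⟨((2 - τ*σ*(1+θ)) - s)/2, by nlinarith [hs2], ?_⟩
    rcases le_or_gt (2 - τ*σ*(1+θ) + 2) 0 with h | h
    · linarith
    · have h1 : (2 - τ*σ*(1+θ) + 2)^2 ≤ s^2 := by nlinarith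
      have h2 : 2 - τ*σ*(1+θ) + 2 ≤ s := by nlinarith
      linarith
  have hnc : ¬(∃ p : ℝ × ℝ, Tendsto (fun k : ℕ => ((l^k : ℝ), ((1-l)/τ) * l^k)) atTop (𝓝 p)) := by
    rintro ⟨p, hp⟩
    have hx : Tendsto (fun k : ℕ => l^k) atTop (𝓝 p.1) := by
      have := (continuous_fst.tendsto p).comp hp
      exact this
    have hx1 : Tendsto (fun k : ℕ => l^(k+1)) atTop (𝓝 p.1) :=
      hx.comp (tendsto_add_atTop_nat 1)
    have hdiff : Tendsto (fun k : ℕ => l^(k+1) - l^k) atTop (𝓝 (p.1 - p.1)) := hx1.sub hx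
    rw [sub_self] at hdiff
    have h2 : ∀ k : ℕ, 2 ≤ |l^(k+1) - l^k| := by
      intro k
      have he : l^(k+1) - l^k = (l - 1) * l^k := by ring
      rw [he, abs_mul, abs_pow]
      have ha : 2 ≤ |l - 1| := by
        rw [abs_of_nonpos (by linarith)]; linarith
      have hb : (1:ℝ) ≤ |l|^k := by
        apply one_le_pow₀
        rw [abs_of_nonpos (by linarith)]; linarith
      nlinarith [abs_nonneg (l - 1)]
    obtain ⟨N, hN⟩ := Metric.tendsto_atTop.mp hdiff 2 (by norm_num)
    have := hN N le_rfl
    rw [Real.dist_eq, sub_zero] at this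
    exact absurd this (not_lt.mpr (h2 N))
  refine ⟨fun k => l^k, fun k => ((1-l)/τ) * l^k, ?_, ?_, hnc, fun hp => hnc ⟨_, hp⟩⟩
  · intro k
    show l^(k+1) = l^k - τ * ((1-l)/τ * l^k)
    rw [pow_succ]
    field_simp
    ring
  · intro k
    show (1-l)/τ * l^(k+1) = (1-l)/τ * l^k + σ*(l^(k+1) + θ*(l^(k+1) - l^k))
    rw [pow_succ]
    field_simp
    linear_combination (-(l^k : ℝ) * τ + (τ-1) * l^k) * hquad
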